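/- Let nx nu : ℕ, f : (Fin nx → ℝ) → (Fin nu → ℝ) → (Fin nx → ℝ), sets 𝒳 𝒳N ⊆ (Fin nx → ℝ)-space and 𝒰 ⊆ (Fin nu → ℝ)-space with 𝒳N ⊆ 𝒳, and κ : (Fin nx → ℝ) → (Fin nu → ℝ) such that for every x ∈ 𝒳N: κ(x) ∈ 𝒰 and f(x, κ(x)) ∈ 𝒳N (terminal invariance). Let N ≥ 1 and let x : ℕ → (Fin nx → ℝ), u : ℕ → (Fin nu → ℝ) satisfy: x(k+1) = f(x k, u k) for all k < N, x k ∈ 𝒳 for all k < N, u k ∈ 𝒰 for all k < N, and x N ∈ 𝒳N. Define the shifted sequences x⁺ k := x(k+1) for k < N, x⁺ N := f(x N, κ(x N)), u⁺ k := u(k+1) for k < N−1, and u⁺(N−1) := κ(x N). Then: x⁺(k+1) = f(x⁺ k, u⁺ k) for all k < N, x⁺ k ∈ 𝒳 for all k < N, u⁺ k ∈ 𝒰 for all k < N, and x⁺ N ∈ 𝒳N. (This is the shift-and-append argument underlying recursive feasibility of the MPC scheme, Theorem 1.) -/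
import Mathlib


/-- Shift-and-append argument underlying recursive feasibility of MPC:
shifting a feasible trajectory and appending one step of the terminal control
law yields a feasible trajectory. -/
theorem mpc_shift_and_append_feasible
    {nx nu : ℕ}
    (f : (Fin nx → ℝ) → (Fin nu → ℝ) → (Fin nx → ℝ))
    (𝒳 𝒳N : Set (Fin nx → ℝ)) (𝒰 : Set (Fin nu → ℝ))
    (h𝒳N : 𝒳N ⊆ 𝒳)
    (κ : (Fin nx → ℝ) → (Fin nu → ℝ))
    (hterm : ∀ x ∈ 𝒳N, κ x ∈ 𝒰 ∧ f x (κ x) ∈ 𝒳N)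
    (N : ℕ) (hN : 1 ≤ N)
    (x : ℕ → (Fin nx → ℝ)) (u : ℕ → (Fin nu → ℝ))
    (hdyn : ∀ k < N, x (k + 1) = f (x k) (u k))
    (hx : ∀ k < N, x k ∈ 𝒳)
    (hu : ∀ k < N, u k ∈ 𝒰)
    (hxN : x N ∈ 𝒳N)
    (xp : ℕ → (Fin nx → ℝ)) (up : ℕ → (Fin nu → ℝ))
    (hxp : ∀ k < N, xp k = x (k + 1))
    (hxpN : xp N = f (x N) (κ (x N)))
    (hup : ∀ k < N - 1, up k = u (k + 1))
    (hupN : up (N - 1) = κ (x N)) :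
    (∀ k < N, xp (k + 1) = f (xp k) (up k)) ∧
    (∀ k < N, xp k ∈ 𝒳) ∧
    (∀ k < N, up k ∈ 𝒰) ∧
    xp N ∈ 𝒳N := by
  have hxN𝒳N := hxN
  refine ⟨?_, ?_, ?_, ?_⟩
  · intro k hk
    rcases lt_or_eq_of_le (Nat.succ_le_of_lt hk) with h1 | h1
    · -- k+1 < N
      have hkN1 : k < N - 1 := by omega
      rw [hxp (k+1) h1, hxp k hk, hup k hkN1]
      exact hdyn (k+1) h1
    · -- k+1 = N
      have hk1 : k = N - 1 := by omega
      have h1' : k + 1 = N := h1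
      rw [h1', hxpN, hxp k hk, hk1, hupN, Nat.sub_add_cancel hN]
  · intro k hk
    rcases lt_or_eq_of_le (Nat.succ_le_of_lt hk) with h1 | h1
    · rw [hxp k hk]; exact hx (k+1) h1
    · have h1' : k + 1 = N := h1
      rw [hxp k hk, h1']; exact h𝒳N hxN
  · intro k hk
    rcases lt_or_eq_of_le (Nat.succ_le_of_lt hk) with h1 | h1
    · have : k < N - 1 := by omega
      rw [hup k this]; exact hu (k+1) h1
    · have : k = N - 1 := by omega
      rw [this, hupN]; exact (hterm _ hxN).1
  · rw [hxpN]; exact (hterm _ hxN).2
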